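/- Define f(x,y) = log|2 sin(πx/y)| if x/y ∉ ℤ and f(x,y) = -log y if x/y ∈ ℤ (for y > 0). Then f is an invariant function: ∑_{r=0}^{n-1} f(x+ry, ny) = f(x,y) for all n ∈ ℤ⁺, x ∈ ℝ, y > 0. -/

import Mathlib

open Real Complex Polynomial Finset

lemma two_I_sin (z : ℂ) :
    Complex.exp (z * Complex.I) - Complex.exp (-(z * Complex.I)) = 2 * Complex.I * Complex.sin z := by
  rw [Complex.sin]
  have h : -z * Complex.I = -(z * Complex.I) := by ring
  rw [h]
  linear_combination (Complex.exp (z * Complex.I) - Complex.exp (-(z * Complex.I))) * Complex.I_sq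

lemma abs_exp_sub_exp (a b : ℝ) :
    ‖Complex.exp (a * Complex.I) - Complex.exp (b * Complex.I)‖ =
      |2 * Real.sin ((a - b) / 2)| := by
  have e1 : (a : ℂ) * Complex.I = ((((a+b)/2 : ℝ)) : ℂ) * Complex.I
      + ((((a-b)/2 : ℝ)) : ℂ) * Complex.I := by push_cast; ring
  have e2 : (b : ℂ) * Complex.I = ((((a+b)/2 : ℝ)) : ℂ) * Complex.I
      + -(((((a-b)/2 : ℝ)) : ℂ) * Complex.I) := by push_cast; ring
  rw [e1, e2, Complex.exp_add, Complex.exp_add, ← mul_sub, two_I_sin, norm_mul,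
    Complex.norm_exp_ofReal_mul_I, one_mul, ← Complex.ofReal_sin]
  rw [norm_mul, norm_mul, Complex.norm_I, Complex.norm_real, Real.norm_eq_abs, abs_mul]
  norm_num

lemma cprod1 (n : ℕ) (hn : 0 < n) (z : ℂ) :
    ∏ i ∈ Finset.range n, (z - (Complex.exp (2 * π * Complex.I / n))⁻¹ ^ i) = z ^ n - 1 := by
  have hζ := (Complex.isPrimitiveRoot_exp n hn.ne').inv
  have key := X_pow_sub_C_eq_prod hζ hn (one_pow n)
  apply_fun Polynomial.eval z at key
  simpa [eval_prod] using key.symm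

lemma prod_abs_sin (n : ℕ) (hn : 0 < n) (θ : ℝ) :
    ∏ r ∈ Finset.range n, |2 * Real.sin (θ + r * π / n)| = |2 * Real.sin (n * θ)| := by
  have hn' : (n : ℂ) ≠ 0 := Nat.cast_ne_zero.mpr hn.ne'
  have hfac : ∀ r : ℕ, |2 * Real.sin (θ + r * π / n)| =
      ‖Complex.exp ((2 * θ : ℝ) * Complex.I)
        - (Complex.exp (2 * π * Complex.I / n))⁻¹ ^ r‖ := by
    intro r
    have h1 : (Complex.exp (2 * π * Complex.I / n))⁻¹ ^ r
        = Complex.exp ((-(2 * r * π / n) : ℝ) * Complex.I) := by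
      rw [← Complex.exp_neg, ← Complex.exp_nat_mul]
      congr 1
      push_cast
      ring
    rw [h1, abs_exp_sub_exp]
    congr 1
    ring
  have hL : |2 * Real.sin (n * θ)| =
      ‖Complex.exp ((2 * θ : ℝ) * Complex.I) ^ n - 1‖ := by
    have h1 : Complex.exp ((2 * θ : ℝ) * Complex.I) ^ n
        = Complex.exp ((2 * (n * θ) : ℝ) * Complex.I) := by
      rw [← Complex.exp_nat_mul]
      congr 1
      push_cast
      ring
    have h2 : (1 : ℂ) = Complex.exp ((0 : ℝ) * Complex.I) := by simp
    rw [h1, h2, abs_exp_sub_exp]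
    norm_num
  rw [hL, ← cprod1 n hn, norm_prod]
  exact Finset.prod_congr rfl fun r _ => hfac r

lemma cprod2 (n : ℕ) (hn : 0 < n) (m : ℤ) (r₀ : ℕ) (hr₀ : r₀ ∈ Finset.range n)
    (hdvd : (n : ℤ) ∣ m + r₀) :
    ∏ r ∈ (Finset.range n).erase r₀,
      (1 - Complex.exp (2 * π * Complex.I / n) ^ r * Complex.exp (2 * π * Complex.I / n) ^ m) = n := by
  set ζ := Complex.exp (2 * π * Complex.I / n) with hζdef
  have hζ := Complex.isPrimitiveRoot_exp n hn.ne'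
  have hζn : ζ ^ (n : ℤ) = 1 := by
    rw [zpow_natCast]; exact hζ.pow_eq_one
  have hα : (ζ ^ m) ^ n = 1 := by
    rw [← zpow_natCast (ζ ^ m), ← zpow_mul, mul_comm, zpow_mul, hζn, one_zpow]
  have key := X_pow_sub_C_eq_prod hζ hn hα
  rw [← Finset.prod_erase_mul _ _ hr₀] at key
  obtain ⟨t, ht⟩ := hdvd
  have hone : ζ ^ r₀ * ζ ^ m = 1 := by
    rw [← zpow_natCast ζ r₀, ← zpow_add₀ (hζ.ne_zero hn.ne'),
      show ((r₀ : ℤ) + m) = (n : ℤ) * t by omega, zpow_mul, hζn, one_zpow]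
  rw [hone, map_one, ← geom_sum_mul] at key
  have hne : (X - 1 : ℂ[X]) ≠ 0 := by
    simpa using X_sub_C_ne_zero (1 : ℂ)
  have key2 := mul_right_cancel₀ hne key
  apply_fun Polynomial.eval 1 at key2
  simpa [eval_prod, eval_geom_sum] using key2.symm

lemma prod_abs_sin_int (n : ℕ) (hn : 0 < n) (m : ℤ) (r₀ : ℕ) (hr₀ : r₀ ∈ Finset.range n)
    (hdvd : (n : ℤ) ∣ m + r₀) :
    ∏ r ∈ (Finset.range n).erase r₀, |2 * Real.sin (π * (m + r) / n)| = n := by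
  have hkey := cprod2 n hn m r₀ hr₀ hdvd
  apply_fun (‖·‖) at hkey
  rw [norm_prod] at hkey
  have hfac : ∀ r : ℕ, ‖1 - Complex.exp (2 * π * Complex.I / n) ^ r
      * Complex.exp (2 * π * Complex.I / n) ^ m‖ = |2 * Real.sin (π * (m + r) / n)| := by
    intro r
    have h1 : Complex.exp (2 * π * Complex.I / n) ^ r
        * Complex.exp (2 * π * Complex.I / n) ^ m
        = Complex.exp ((2 * π * (m + r) / n : ℝ) * Complex.I) := by
      rw [← Complex.exp_nat_mul, ← Complex.exp_int_mul, ← Complex.exp_add]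
      congr 1
      push_cast
      ring
    have h2 : (1 : ℂ) = Complex.exp ((0 : ℝ) * Complex.I) := by simp
    rw [h1]
    nth_rewrite 1 [h2]
    rw [abs_exp_sub_exp]
    rw [show (0 - 2 * π * ((m : ℝ) + r) / n) / 2 = -(π * (m + r) / n) by ring,
      Real.sin_neg, mul_neg, abs_neg]
  calc ∏ r ∈ (Finset.range n).erase r₀, |2 * Real.sin (π * (m + r) / n)|
      = ∏ r ∈ (Finset.range n).erase r₀, ‖1 - Complex.exp (2 * π * Complex.I / n) ^ r
        * Complex.exp (2 * π * Complex.I / n) ^ m‖ :=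
        Finset.prod_congr rfl fun r _ => (hfac r).symm
    _ = ‖((n : ℂ))‖ := hkey
    _ = n := by simp

lemma aux_r0 (n : ℕ) (m : ℤ) (r : ℕ) (hr : r < n) (k : ℤ) (hz : m + (r : ℤ) = k * n) :
    (-m) % (n : ℤ) = (r : ℤ) := by
  have hn' : (0 : ℤ) < (n : ℤ) := by omega
  have h1 : -m = (r : ℤ) - k * n := by linarith
  rw [h1, show (r : ℤ) - k * n = (r : ℤ) + (n : ℤ) * (-k) by ring,
    Int.add_mul_emod_self_left, Int.emod_eq_of_lt (by positivity) (by exact_mod_cast hr)]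

theorem stmt_12 (f : ℝ → ℝ → ℝ)
    (hf1 : ∀ x y : ℝ, 0 < y → (¬ ∃ k : ℤ, x / y = (k : ℝ)) →
      f x y = Real.log |2 * Real.sin (π * x / y)|)
    (hf2 : ∀ x y : ℝ, 0 < y → (∃ k : ℤ, x / y = (k : ℝ)) →
      f x y = -Real.log y) :
    ∀ n : ℕ, 0 < n → ∀ x y : ℝ, 0 < y →
      ∑ r ∈ Finset.range n, f (x + r * y) (n * y) = f x y := by
  intro n hn x y hy
  have hnR : (0 : ℝ) < (n : ℝ) := by exact_mod_cast hn
  have hnR' : (n : ℝ) ≠ 0 := hnR.ne'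
  have hy' : y ≠ 0 := hy.ne'
  have hny : (0 : ℝ) < (n : ℝ) * y := by positivity
  by_cases hA : ∃ k : ℤ, x / y = (k : ℝ)
  · -- integer case
    obtain ⟨m, hm⟩ := hA
    have hx : x = m * y := by
      field_simp at hm; linarith
    have hn' : (0 : ℤ) < (n : ℤ) := by exact_mod_cast hn
    have hmod1 : 0 ≤ (-m) % (n : ℤ) := Int.emod_nonneg _ hn'.ne'
    have hmod2 : (-m) % (n : ℤ) < (n : ℤ) := Int.emod_lt_of_pos _ hn'
    have hmod3 : (-m) % (n : ℤ) = -m - (n : ℤ) * ((-m) / (n : ℤ)) := Int.emod_def _ _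
    obtain ⟨r₀, hr₀def⟩ : ∃ r₀ : ℕ, (r₀ : ℤ) = (-m) % (n : ℤ) :=
      ⟨((-m) % (n : ℤ)).toNat, Int.toNat_of_nonneg hmod1⟩
    have hr0lt : r₀ < n := by omega
    have hr₀mem : r₀ ∈ Finset.range n := Finset.mem_range.mpr hr0lt
    have hdvd : (n : ℤ) ∣ m + (r₀ : ℤ) :=
      ⟨-((-m) / (n : ℤ)), by rw [hr₀def, hmod3]; ring⟩
    have hang : ∀ r : ℕ, (x + r * y) / ((n : ℝ) * y) = ((m : ℝ) + r) / n := by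
      intro r
      rw [hx]
      field_simp
    have hterm : ∀ r ∈ (Finset.range n).erase r₀,
        f (x + r * y) ((n : ℝ) * y) = Real.log |2 * Real.sin (π * ((m : ℝ) + r) / n)| := by
      intro r hr
      have hrlt : r < n := Finset.mem_range.mp (Finset.mem_of_mem_erase hr)
      have hrne : r ≠ r₀ := Finset.ne_of_mem_erase hr
      have hnotint : ¬ ∃ k : ℤ, (x + r * y) / ((n : ℝ) * y) = (k : ℝ) := by
        rintro ⟨k, hk⟩
        rw [hang r] at hk
        have hzk : (m : ℝ) + r = k * n := by
          field_simp at hk; linarith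
        have hz : m + (r : ℤ) = k * n := by exact_mod_cast hzk
        have := aux_r0 n m r hrlt k hz
        omega
      rw [hf1 _ _ hny hnotint]
      congr 2
      rw [show π * (x + r * y) / ((n : ℝ) * y) = π * ((x + r * y) / ((n : ℝ) * y)) by ring,
        hang r]
      ring
    rw [← Finset.sum_erase_add _ _ hr₀mem, Finset.sum_congr rfl hterm]
    have hne : ∀ r ∈ (Finset.range n).erase r₀, |2 * Real.sin (π * ((m : ℝ) + r) / n)| ≠ 0 := by
      intro r hr
      have hrlt : r < n := Finset.mem_range.mp (Finset.mem_of_mem_erase hr)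
      have hrne : r ≠ r₀ := Finset.ne_of_mem_erase hr
      simp only [ne_eq, abs_eq_zero, mul_eq_zero, OfNat.ofNat_ne_zero, false_or]
      intro hsin
      obtain ⟨k, hk⟩ := Real.sin_eq_zero_iff.mp hsin
      have hzk : (m : ℝ) + r = k * n := by
        have hpi : (0:ℝ) < π := Real.pi_pos
        field_simp at hk
        nlinarith [hk]
      have hz : m + (r : ℤ) = k * n := by exact_mod_cast hzk
      have := aux_r0 n m r hrlt k hz
      omega
    rw [← Real.log_prod hne, prod_abs_sin_int n hn m r₀ hr₀mem hdvd]
    have hterm₀ : f (x + r₀ * y) ((n : ℝ) * y) = -Real.log ((n : ℝ) * y) := by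
      apply hf2 _ _ hny
      obtain ⟨t, ht⟩ := hdvd
      refine ⟨t, ?_⟩
      rw [hang r₀]
      have : (m : ℝ) + r₀ = n * t := by exact_mod_cast ht
      rw [this]
      field_simp
    rw [hterm₀, hf2 x y hy ⟨m, hm⟩, Real.log_mul hnR' hy']
    ring
  · -- non-integer case
    have hnotint : ∀ r : ℕ, ¬ ∃ k : ℤ, (x + r * y) / ((n : ℝ) * y) = (k : ℝ) := by
      rintro r ⟨k, hk⟩
      apply hA
      refine ⟨k * n - r, ?_⟩
      have hxy : x + r * y = k * ((n : ℝ) * y) := by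
        field_simp at hk; linarith
      push_cast
      field_simp
      linarith
    set θ : ℝ := π * x / ((n : ℝ) * y) with hθdef
    have hang : ∀ r : ℕ, π * (x + r * y) / ((n : ℝ) * y) = θ + r * π / n := by
      intro r
      rw [hθdef]
      field_simp
    have hterm : ∀ r ∈ Finset.range n,
        f (x + r * y) ((n : ℝ) * y) = Real.log |2 * Real.sin (θ + r * π / n)| := by
      intro r hr
      rw [hf1 _ _ hny (hnotint r), hang r]
    rw [Finset.sum_congr rfl hterm]
    have hne : ∀ r ∈ Finset.range n, |2 * Real.sin (θ + r * π / n)| ≠ 0 := by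
      intro r hr
      simp only [ne_eq, abs_eq_zero, mul_eq_zero, OfNat.ofNat_ne_zero, false_or]
      intro hsin
      rw [← hang r] at hsin
      obtain ⟨k, hk⟩ := Real.sin_eq_zero_iff.mp hsin
      apply hnotint r
      refine ⟨k, ?_⟩
      have hpi : (0:ℝ) < π := Real.pi_pos
      have : π * ((x + r * y) / ((n : ℝ) * y)) = π * (k : ℝ) := by
        rw [show π * ((x + r * y) / ((n : ℝ) * y)) = π * (x + r * y) / ((n : ℝ) * y) by ring,
          ← hk]; ring
      exact mul_left_cancel₀ hpi.ne' this
    have hnθ : (n : ℝ) * θ = π * x / y := by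
      rw [hθdef]
      field_simp
    rw [← Real.log_prod hne, prod_abs_sin n hn θ, hnθ, hf1 x y hy hA]
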